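/- For every n ≥ 1, the quotient of the Clifford group (the normalizer of the n-qubit Pauli group P_n in U(2^n)) by its subgroup of unitary scalar multiples of the identity is a finite group. -/

import Mathlib

/-- The matrix of the Pauli `X` operator acting on the `j`-th qubit of `n` qubits
(and as the identity on all other tensor factors). -/
noncomputable def XMat (n : ℕ) (j : Fin n) :
    Matrix (Fin n → Fin 2) (Fin n → Fin 2) ℂ :=
  Matrix.of fun v w => if v j ≠ w j ∧ ∀ i, i ≠ j → v i = w i then 1 else 0

/-- The matrix of the Pauli `Z` operator acting on the `j`-th qubit of `n` qubits
(and as the identity on all other tensor factors). -/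
noncomputable def ZMat (n : ℕ) (j : Fin n) :
    Matrix (Fin n → Fin 2) (Fin n → Fin 2) ℂ :=
  Matrix.of fun v w => if v = w then (if v j = 1 then -1 else 1) else 0

variable {n : ℕ}

def flipQ (j : Fin n) (v : Fin n → Fin 2) : Fin n → Fin 2 :=
  Function.update v j (1 - v j)

lemma fin2_ne : ∀ (x y : Fin 2), x ≠ y ↔ y = 1 - x := by decide

lemma fin2_ne_sub : ∀ x : Fin 2, x ≠ 1 - x := by decide

lemma fin2_sub_sub : ∀ x : Fin 2, 1 - (1 - x) = x := by decide

lemma flipQ_apply_self (j : Fin n) (v : Fin n → Fin 2) : flipQ j v j = 1 - v j := by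
  simp [flipQ]

lemma flipQ_apply_ne (j : Fin n) (v : Fin n → Fin 2) {i : Fin n} (h : i ≠ j) :
    flipQ j v i = v i := by
  simp [flipQ, Function.update_of_ne h]

lemma flipQ_invol (j : Fin n) (v : Fin n → Fin 2) : flipQ j (flipQ j v) = v := by
  funext i
  by_cases h : i = j
  · subst h
    rw [flipQ_apply_self, flipQ_apply_self, fin2_sub_sub]
  · rw [flipQ_apply_ne _ _ h, flipQ_apply_ne _ _ h]

lemma XMat_apply (j : Fin n) (v w : Fin n → Fin 2) :
    XMat n j v w = if w = flipQ j v then 1 else 0 := by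
  simp only [XMat, Matrix.of_apply]
  by_cases h : w = flipQ j v
  · subst h
    rw [if_pos, if_pos rfl]
    refine ⟨by rw [flipQ_apply_self]; exact fin2_ne_sub _, fun i hi => (flipQ_apply_ne _ _ hi).symm⟩
  · rw [if_neg, if_neg h]
    rintro ⟨h1, h2⟩
    apply h
    funext i
    by_cases hi : i = j
    · subst hi
      rw [flipQ_apply_self, ← (fin2_ne _ _).mp h1]
    · rw [flipQ_apply_ne _ _ hi, h2 i hi]

lemma ZMat_eq (j : Fin n) :
    ZMat n j = Matrix.diagonal (fun v => if v j = 1 then (-1 : ℂ) else 1) := by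
  ext v w
  simp only [ZMat, Matrix.of_apply, Matrix.diagonal_apply]

lemma XMat_mem {j : Fin n} : XMat n j ∈ Matrix.unitaryGroup (Fin n → Fin 2) ℂ := by
  have hsym : star (XMat n j) = XMat n j := by
    ext v w
    simp only [Matrix.star_apply, XMat_apply]
    have hiff : v = flipQ j w ↔ w = flipQ j v := by
      constructor <;> (rintro rfl; rw [flipQ_invol])
    by_cases h : w = flipQ j v
    · rw [if_pos (hiff.mpr h), if_pos h, star_one]
    · rw [if_neg (fun hh => h (hiff.mp hh)), if_neg h, star_zero]
  rw [Matrix.mem_unitaryGroup_iff, hsym]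
  ext v w
  simp only [Matrix.mul_apply, XMat_apply, ite_mul, one_mul, zero_mul]
  rw [Finset.sum_ite_eq' Finset.univ (flipQ j v)]
  simp [flipQ_invol, Matrix.one_apply, eq_comm]

lemma ZMat_mem {j : Fin n} : ZMat n j ∈ Matrix.unitaryGroup (Fin n → Fin 2) ℂ := by
  rw [Matrix.mem_unitaryGroup_iff, ZMat_eq, Matrix.star_eq_conjTranspose,
    Matrix.diagonal_conjTranspose, Matrix.diagonal_mul_diagonal, ← Matrix.diagonal_one]
  refine congrArg Matrix.diagonal (funext fun v => ?_)
  show (if v j = 1 then (-1:ℂ) else 1) * star (if v j = 1 then (-1:ℂ) else 1) = 1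
  by_cases h : v j = 1 <;> simp [h]

lemma commutant_scalar (A : Matrix (Fin n → Fin 2) (Fin n → Fin 2) ℂ)
    (hX : ∀ j, A * XMat n j = XMat n j * A)
    (hZ : ∀ j, A * ZMat n j = ZMat n j * A) :
    ∃ c : ℂ, A = c • 1 := by
  -- off-diagonal entries vanish
  have hoff : ∀ v w, v ≠ w → A v w = 0 := by
    intro v w hvw
    obtain ⟨j, hj⟩ : ∃ j, v j ≠ w j := by
      by_contra hc
      push_neg at hc
      exact hvw (funext hc)
    have := congrFun (congrFun (hZ j) v) w
    rw [ZMat_eq, Matrix.mul_diagonal, Matrix.diagonal_mul] at this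
    have hsign : (if w j = 1 then (-1:ℂ) else 1) = -(if v j = 1 then (-1:ℂ) else 1) := by
      rcases (by decide : ∀ x y : Fin 2, x ≠ y → (x = 1 ∧ ¬ y = 1) ∨ (¬ x = 1 ∧ y = 1)) _ _ hj
        with ⟨h1, h2⟩ | ⟨h1, h2⟩ <;> simp [h1, h2]
    rw [hsign] at this
    have h2 : (2 : ℂ) * (A v w * (if v j = 1 then (-1:ℂ) else 1)) = 0 := by
      ring_nf
      ring_nf at this
      linear_combination -this
    have hne : (if v j = 1 then (-1:ℂ) else 1) ≠ 0 := by
      by_cases h : v j = 1 <;> simp [h]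
    have := mul_eq_zero.mp h2
    simp only [OfNat.ofNat_ne_zero, false_or] at this
    exact (mul_eq_zero.mp this).resolve_right hne
  -- diagonal entries invariant under flips
  have hflip : ∀ j v, A v v = A (flipQ j v) (flipQ j v) := by
    intro j v
    have := congrFun (congrFun (hX j) v) (flipQ j v)
    -- (A * X) v w = A v (flipQ j w);  (X * A) v w = A (flipQ j v) w
    have hAX : (A * XMat n j) v (flipQ j v) = A v (flipQ j (flipQ j v)) := by
      rw [Matrix.mul_apply]
      have : ∀ u, XMat n j u (flipQ j v) = if u = flipQ j (flipQ j v) then 1 else 0 := by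
        intro u
        rw [XMat_apply]
        by_cases h : u = flipQ j (flipQ j v)
        · rw [if_pos h, if_pos]; subst h; rw [flipQ_invol]
        · rw [if_neg h, if_neg]
          intro hh
          exact h (by rw [hh, flipQ_invol])
      simp only [this, mul_ite, mul_one, mul_zero]
      rw [Finset.sum_ite_eq' Finset.univ]
      simp
    have hXA : (XMat n j * A) v (flipQ j v) = A (flipQ j v) (flipQ j v) := by
      rw [Matrix.mul_apply]
      simp only [XMat_apply, ite_mul, one_mul, zero_mul]
      rw [Finset.sum_ite_eq' Finset.univ]
      simp
    rw [hAX, hXA, flipQ_invol] at this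
    exact this
  -- all diagonal entries are equal
  have hdiag : ∀ s : Finset (Fin n), ∀ v w : Fin n → Fin 2,
      (∀ i, i ∉ s → v i = w i) → A v v = A w w := by
    intro s
    induction s using Finset.induction_on with
    | empty =>
      intro v w h
      rw [funext fun i => h i (Finset.notMem_empty i)]
    | @insert j s hjs ih =>
      intro v w h
      by_cases hj : v j = w j
      · refine ih v w fun i hi => ?_
        by_cases hij : i = j
        · subst hij; exact hj
        · exact h i (by simp [hi, hij])
      · have h1 : A v v = A (flipQ j v) (flipQ j v) := hflip j v
        have h2 : A (flipQ j v) (flipQ j v) = A w w := by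
          refine ih _ _ fun i hi => ?_
          by_cases hij : i = j
          · subst hij
            rw [flipQ_apply_self, ← (fin2_ne _ _).mp hj]
          · rw [flipQ_apply_ne _ _ hij]
            exact h i (by simp [hi, hij])
        rw [h1, h2]
  refine ⟨A (fun _ => 0) (fun _ => 0), ?_⟩
  ext v w
  by_cases h : v = w
  · subst h
    rw [Matrix.smul_apply, Matrix.one_apply_eq, smul_eq_mul, mul_one]
    exact hdiag Finset.univ v (fun _ => 0) (fun i hi => absurd (Finset.mem_univ i) hi)
  · rw [hoff v w h, Matrix.smul_apply, Matrix.one_apply_ne h, smul_eq_mul, mul_zero]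

/-- The `n`-qubit Pauli group: the subgroup of the unitary group `U(2^n)` generated by
`i·I` together with `X_j` and `Z_j` for each qubit `j`. -/
noncomputable def PauliGroup (n : ℕ) :
    Subgroup (Matrix.unitaryGroup (Fin n → Fin 2) ℂ) :=
  Subgroup.closure { U : Matrix.unitaryGroup (Fin n → Fin 2) ℂ |
    (U : Matrix (Fin n → Fin 2) (Fin n → Fin 2) ℂ)
        = Complex.I • (1 : Matrix (Fin n → Fin 2) (Fin n → Fin 2) ℂ)
    ∨ ∃ j : Fin n, (U : Matrix (Fin n → Fin 2) (Fin n → Fin 2) ℂ) = XMat n j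
        ∨ (U : Matrix (Fin n → Fin 2) (Fin n → Fin 2) ℂ) = ZMat n j }

/-- The subgroup of monomial unitaries with fourth-root-of-unity entries. -/
noncomputable def monoSubgroup (n : ℕ) : Subgroup (Matrix.unitaryGroup (Fin n → Fin 2) ℂ) where
  carrier := { U | ∃ (σ : Equiv.Perm (Fin n → Fin 2)) (c : (Fin n → Fin 2) → ℂ),
    (∀ v, c v ^ 4 = 1) ∧ ∀ v w,
      (U : Matrix (Fin n → Fin 2) (Fin n → Fin 2) ℂ) v w = if w = σ v then c v else 0 }
  one_mem' := by
    refine ⟨Equiv.refl _, fun _ => 1, fun _ => one_pow 4, fun v w => ?_⟩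
    simp [Matrix.one_apply, eq_comm]
  mul_mem' := by
    rintro a b ⟨σ, c, hc, ha⟩ ⟨τ, d, hd, hb⟩
    refine ⟨σ.trans τ, fun v => c v * d (σ v), fun v => by rw [mul_pow, hc, hd, one_mul],
      fun v w => ?_⟩
    have : ((a * b : Matrix.unitaryGroup (Fin n → Fin 2) ℂ) :
        Matrix (Fin n → Fin 2) (Fin n → Fin 2) ℂ) = (a : Matrix _ _ ℂ) * (b : Matrix _ _ ℂ) := rfl
    rw [this, Matrix.mul_apply]
    simp only [ha, hb, ite_mul, zero_mul]
    rw [Finset.sum_ite_eq' Finset.univ (σ v)]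
    simp [mul_ite, Equiv.trans_apply]
    exact if_congr Iff.rfl rfl rfl
  inv_mem' := by
    rintro a ⟨σ, c, hc, ha⟩
    refine ⟨σ.symm, fun v => star (c (σ.symm v)),
      fun v => by rw [← star_pow, hc, star_one], fun v w => ?_⟩
    rw [Matrix.UnitaryGroup.inv_apply, Matrix.star_apply, ha]
    by_cases h : w = σ.symm v
    · subst h
      rw [if_pos rfl, if_pos (σ.apply_symm_apply v).symm]
    · rw [if_neg, if_neg h, star_zero]
      intro hh
      exact h (by rw [hh, Equiv.symm_apply_apply])

lemma pauli_le_mono : PauliGroup n ≤ monoSubgroup n := by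
  rw [PauliGroup, Subgroup.closure_le]
  rintro U (h | ⟨j, h | h⟩)
  · refine ⟨Equiv.refl _, fun _ => Complex.I, fun _ => Complex.I_pow_four, fun v w => ?_⟩
    rw [h]
    simp [Matrix.one_apply, eq_comm]
  · refine ⟨Function.Involutive.toPerm (flipQ j) (flipQ_invol j),
      fun _ => 1, fun _ => one_pow 4, fun v w => by rw [h, XMat_apply]; rfl⟩
  · refine ⟨Equiv.refl _, fun v => if v j = 1 then (-1:ℂ) else 1,
      fun v => by by_cases hh : v j = 1 <;> norm_num [hh], fun v w => ?_⟩
    rw [h, ZMat_eq]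
    simp only [Matrix.diagonal_apply, Equiv.refl_apply]
    by_cases hh : v = w
    · subst hh; simp
    · rw [if_neg hh]; exact (if_neg (fun hhh : w = v => hh hhh.symm)).symm

lemma pauli_finite : Finite (PauliGroup n) := by
  have hroots : {x : ℂ | x ^ 4 = 1}.Finite := by
    have : {x : ℂ | x ^ 4 = 1} ⊆ ↑(Polynomial.nthRoots 4 (1:ℂ)).toFinset := fun x hx => by
      simpa [Polynomial.mem_nthRoots] using hx
    exact (Finset.finite_toSet _).subset this
  haveI : Finite {x : ℂ // x ^ 4 = 1} := hroots.to_subtype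
  have hmono : (monoSubgroup n : Set (Matrix.unitaryGroup (Fin n → Fin 2) ℂ)).Finite := by
    set g : Equiv.Perm (Fin n → Fin 2) × ((Fin n → Fin 2) → {x : ℂ // x ^ 4 = 1}) →
        Matrix (Fin n → Fin 2) (Fin n → Fin 2) ℂ :=
      fun p => Matrix.of fun v w => if w = p.1 v then (p.2 v : ℂ) else 0 with hg
    have hsub : (monoSubgroup n : Set (Matrix.unitaryGroup (Fin n → Fin 2) ℂ)) ⊆
        (fun U : Matrix.unitaryGroup (Fin n → Fin 2) ℂ =>
          (U : Matrix (Fin n → Fin 2) (Fin n → Fin 2) ℂ)) ⁻¹' Set.range g := by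
      rintro U ⟨σ, c, hc, hU⟩
      exact ⟨⟨σ, fun v => ⟨c v, hc v⟩⟩, by ext v w; exact (hU v w).symm⟩
    refine Set.Finite.subset (Set.Finite.preimage ?_ (Set.finite_range g)) hsub
    exact Set.injOn_of_injective Subtype.coe_injective
  have : ((PauliGroup n : Set (Matrix.unitaryGroup (Fin n → Fin 2) ℂ))).Finite :=
    hmono.subset pauli_le_mono
  exact this.to_subtype

set_option synthInstance.maxHeartbeats 400000 in
/-- The subgroup of the Clifford group (the normalizer of the Pauli group in `U(2^n)`)
consisting of unitary scalar multiples of the identity. -/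
noncomputable def scalarSubgroup (n : ℕ) : Subgroup (Subgroup.normalizer (PauliGroup n : Set (Matrix.unitaryGroup (Fin n → Fin 2) ℂ))) where
  carrier := { V | ∃ c : ℂ,
    ((V : Matrix.unitaryGroup (Fin n → Fin 2) ℂ) :
        Matrix (Fin n → Fin 2) (Fin n → Fin 2) ℂ)
      = c • (1 : Matrix (Fin n → Fin 2) (Fin n → Fin 2) ℂ) }
  one_mem' := ⟨1, by rw [one_smul]; rfl⟩
  mul_mem' := by
    rintro a b ⟨c, hc⟩ ⟨d, hd⟩
    refine ⟨c * d, ?_⟩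
    push_cast
    rw [hc, hd, smul_mul_smul_comm, one_mul]
  inv_mem' := by
    rintro a ⟨c, hc⟩
    refine ⟨starRingEnd ℂ c, ?_⟩
    have h : ((a⁻¹ : Subgroup.normalizer (PauliGroup n : Set (Matrix.unitaryGroup (Fin n → Fin 2) ℂ))) :
          Matrix (Fin n → Fin 2) (Fin n → Fin 2) ℂ)
        = star ((a : Subgroup.normalizer (PauliGroup n : Set (Matrix.unitaryGroup (Fin n → Fin 2) ℂ))) :
            Matrix (Fin n → Fin 2) (Fin n → Fin 2) ℂ) := rfl
    rw [h, hc, star_smul, star_one]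
    rfl

/-- The quotient of the Clifford group by its subgroup of unitary scalars is finite. -/
theorem clifford_mod_scalars_finite (n : ℕ) (hn : 1 ≤ n) :
    Finite ((Subgroup.normalizer (PauliGroup n : Set (Matrix.unitaryGroup (Fin n → Fin 2) ℂ)) : Subgroup (Matrix.unitaryGroup (Fin n → Fin 2) ℂ))
      ⧸ scalarSubgroup n) := by
  classical
  haveI : Finite (PauliGroup n) := pauli_finite
  set f : (Subgroup.normalizer (PauliGroup n : Set (Matrix.unitaryGroup (Fin n → Fin 2) ℂ)) : Subgroup (Matrix.unitaryGroup (Fin n → Fin 2) ℂ)) →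
      ((PauliGroup n) → (PauliGroup n)) :=
    fun V g => ⟨(V : Matrix.unitaryGroup (Fin n → Fin 2) ℂ) * ↑g
        * (V : Matrix.unitaryGroup (Fin n → Fin 2) ℂ)⁻¹,
      (Subgroup.mem_normalizer_iff.mp V.2 _).mp g.2⟩ with hf
  have central : ∀ V W, V⁻¹ * W ∈ scalarSubgroup n → f V = f W := by
    intro V W hVW
    obtain ⟨c, hc⟩ := hVW
    set A := (V : Matrix.unitaryGroup (Fin n → Fin 2) ℂ)
    set B := (W : Matrix.unitaryGroup (Fin n → Fin 2) ℂ)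
    have hcoe : ((V⁻¹ * W : Subgroup.normalizer (PauliGroup n : Set (Matrix.unitaryGroup (Fin n → Fin 2) ℂ))) :
        Matrix.unitaryGroup (Fin n → Fin 2) ℂ) = A⁻¹ * B := rfl
    rw [hcoe] at hc
    have cmul : ∀ (X Y : Matrix.unitaryGroup (Fin n → Fin 2) ℂ),
        ((X * Y : Matrix.unitaryGroup (Fin n → Fin 2) ℂ) : Matrix (Fin n → Fin 2) (Fin n → Fin 2) ℂ)
          = (X : Matrix (Fin n → Fin 2) (Fin n → Fin 2) ℂ) * (Y : Matrix (Fin n → Fin 2) (Fin n → Fin 2) ℂ) :=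
      fun _ _ => rfl
    have hcomm : ∀ U : Matrix.unitaryGroup (Fin n → Fin 2) ℂ, (A⁻¹ * B) * U = U * (A⁻¹ * B) := by
      intro U
      apply Subtype.ext
      rw [cmul (A⁻¹ * B) U, cmul U (A⁻¹ * B), hc, Matrix.smul_mul, Matrix.mul_smul, one_mul, mul_one]
    funext g
    apply Subtype.ext
    show A * ↑g * A⁻¹ = B * ↑g * B⁻¹
    have hB : B = A * (A⁻¹ * B) := by group
    calc A * ↑g * A⁻¹ = A * ((A⁻¹ * B) * ↑g * (A⁻¹ * B)⁻¹) * A⁻¹ := by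
          rw [hcomm (↑g), mul_assoc ((↑g : Matrix.unitaryGroup (Fin n → Fin 2) ℂ)),
            mul_inv_cancel, mul_one]
      _ = B * ↑g * B⁻¹ := by rw [hB]; group
  have key : ∀ V W, f V = f W → V⁻¹ * W ∈ scalarSubgroup n := by
    intro V W hVW
    set A := (V : Matrix.unitaryGroup (Fin n → Fin 2) ℂ)
    set B := (W : Matrix.unitaryGroup (Fin n → Fin 2) ℂ)
    have hcomm : ∀ x : Matrix.unitaryGroup (Fin n → Fin 2) ℂ, x ∈ PauliGroup n →
        x * (A⁻¹ * B) = (A⁻¹ * B) * x := by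
      intro x hx
      have h1 : A * x * A⁻¹ = B * x * B⁻¹ :=
        Subtype.ext_iff.mp (congrFun hVW ⟨x, hx⟩)
      calc x * (A⁻¹ * B) = A⁻¹ * (A * x * A⁻¹) * B := by group
        _ = A⁻¹ * (B * x * B⁻¹) * B := by rw [h1]
        _ = (A⁻¹ * B) * x := by group
    have hXmem : ∀ j : Fin n, (⟨XMat n j, XMat_mem⟩ :
        Matrix.unitaryGroup (Fin n → Fin 2) ℂ) ∈ PauliGroup n :=
      fun j => Subgroup.subset_closure (Or.inr ⟨j, Or.inl rfl⟩)
    have hZmem : ∀ j : Fin n, (⟨ZMat n j, ZMat_mem⟩ :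
        Matrix.unitaryGroup (Fin n → Fin 2) ℂ) ∈ PauliGroup n :=
      fun j => Subgroup.subset_closure (Or.inr ⟨j, Or.inr rfl⟩)
    have cmul : ∀ (X Y : Matrix.unitaryGroup (Fin n → Fin 2) ℂ),
        ((X * Y : Matrix.unitaryGroup (Fin n → Fin 2) ℂ) : Matrix (Fin n → Fin 2) (Fin n → Fin 2) ℂ)
          = (X : Matrix (Fin n → Fin 2) (Fin n → Fin 2) ℂ) * (Y : Matrix (Fin n → Fin 2) (Fin n → Fin 2) ℂ) :=
      fun _ _ => rfl
    obtain ⟨c, hc⟩ : ∃ c : ℂ,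
        ((A⁻¹ * B : Matrix.unitaryGroup (Fin n → Fin 2) ℂ)
          : Matrix (Fin n → Fin 2) (Fin n → Fin 2) ℂ) = c • 1 := by
      apply commutant_scalar
      · intro j
        have h2 := congrArg Subtype.val ((hcomm _ (hXmem j)).symm)
        rw [cmul (A⁻¹ * B) _, cmul _ (A⁻¹ * B)] at h2
        exact h2
      · intro j
        have h2 := congrArg Subtype.val ((hcomm _ (hZmem j)).symm)
        rw [cmul (A⁻¹ * B) _, cmul _ (A⁻¹ * B)] at h2
        exact h2
    exact ⟨c, hc⟩
  refine Finite.of_injective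
    (fun q : ((Subgroup.normalizer (PauliGroup n : Set (Matrix.unitaryGroup (Fin n → Fin 2) ℂ)) : Subgroup (Matrix.unitaryGroup (Fin n → Fin 2) ℂ))
        ⧸ scalarSubgroup n) =>
      Quotient.liftOn' q f fun a b hab =>
        central a b (QuotientGroup.leftRel_apply.mp hab)) ?_
  intro q1 q2 h
  induction q1 using Quotient.inductionOn' with
  | h a =>
    induction q2 using Quotient.inductionOn' with
    | h b =>
      exact Quotient.sound' (QuotientGroup.leftRel_apply.mpr (key a b h))
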